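/- Let β : V → W be a linear map of finite-dimensional real vector spaces and let τ ⊆ V be a polyhedral convex cone. Then the following are equivalent: (1) for every linear functional l : W → ℝ, if l ∘ β is nonnegative on τ, then l ∘ β vanishes on τ; (2) 0 lies in the relative interior of β(τ). -/
import Mathlib

set_option linter.unusedSectionVars false

/-- The polyhedral convex cone generated by a finite set `s`. -/
def coneOf {V : Type*} [AddCommGroup V] [Module ℝ V] (s : Finset V) : Set V :=
  {x | ∃ f : V → ℝ, (∀ v, 0 ≤ f v) ∧ x = ∑ v ∈ s, f v • v}

section Aux
variable {V W : Type*} [NormedAddCommGroup V] [NormedSpace ℝ V] [FiniteDimensional ℝ V]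
  [NormedAddCommGroup W] [NormedSpace ℝ W] [FiniteDimensional ℝ W]

/-- The cone in `W` generated by the images under `β` of a finite set in `V`. -/
def coneIm (β : V →ₗ[ℝ] W) (t : Finset V) : Set W :=
  {x | ∃ f : V → ℝ, (∀ v, 0 ≤ f v) ∧ x = ∑ v ∈ t, f v • β v}

lemma coneIm_zero_mem (β : V →ₗ[ℝ] W) (t : Finset V) : (0 : W) ∈ coneIm β t :=
  ⟨0, fun _ => le_rfl, by simp⟩

lemma coneIm_add_mem (β : V →ₗ[ℝ] W) (t : Finset V) {x y : W}
    (hx : x ∈ coneIm β t) (hy : y ∈ coneIm β t) : x + y ∈ coneIm β t := by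
  obtain ⟨f, hf, rfl⟩ := hx
  obtain ⟨g, hg, rfl⟩ := hy
  exact ⟨f + g, fun v => add_nonneg (hf v) (hg v), by simp [add_smul, Finset.sum_add_distrib]⟩

lemma coneIm_smul_mem (β : V →ₗ[ℝ] W) (t : Finset V) {r : ℝ} (hr : 0 ≤ r) {x : W}
    (hx : x ∈ coneIm β t) : r • x ∈ coneIm β t := by
  obtain ⟨f, hf, rfl⟩ := hx
  exact ⟨fun v => r * f v, fun v => mul_nonneg hr (hf v),
    by simp [Finset.smul_sum, smul_smul]⟩

lemma coneIm_convex (β : V →ₗ[ℝ] W) (t : Finset V) : Convex ℝ (coneIm β t) := by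
  intro x hx y hy a b ha hb _
  exact coneIm_add_mem β t (coneIm_smul_mem β t ha hx) (coneIm_smul_mem β t hb hy)

lemma coneIm_gen_mem (β : V →ₗ[ℝ] W) (t : Finset V) {v : V} (hv : v ∈ t) :
    β v ∈ coneIm β t := by
  classical
  refine ⟨fun u => if u = v then 1 else 0, fun u => by positivity, ?_⟩
  simp [ite_smul, Finset.sum_ite_eq' t v (fun u => β u), hv]

lemma coneIm_sum_mem (β : V →ₗ[ℝ] W) (t : Finset V) (u : Finset V) (f : V → ℝ)
    (hf : ∀ v, 0 ≤ f v) (c : V → W) (hc : ∀ v ∈ u, c v ∈ coneIm β t) :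
    (∑ v ∈ u, f v • c v) ∈ coneIm β t :=
  Finset.sum_induction _ (· ∈ coneIm β t) (fun _ _ => coneIm_add_mem β t)
    (coneIm_zero_mem β t) (fun v hv => coneIm_smul_mem β t (hf v) (hc v hv))

/-- Reduction step for conic Carathéodory: given a nontrivial nonnegative relation, we can
drop one generator. -/
lemma coneIm_step [DecidableEq V] (β : V →ₗ[ℝ] W) (t : Finset V) (f : V → ℝ)
    (hf : ∀ v, 0 ≤ f v)
    (c : V → ℝ) (hcs : ∑ v ∈ t, c v • β v = 0) (hpos : ∃ v ∈ t, 0 < c v) :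
    ∃ v₀ ∈ t, ∃ f' : V → ℝ, (∀ v, 0 ≤ f' v) ∧
      ∑ v ∈ t.erase v₀, f' v • β v = ∑ v ∈ t, f v • β v := by
  classical
  obtain ⟨w, hwt, hwc⟩ := hpos
  obtain ⟨v₀, hv₀P, hmin⟩ := (t.filter fun v => 0 < c v).exists_min_image
    (fun v => f v / c v) ⟨w, Finset.mem_filter.mpr ⟨hwt, hwc⟩⟩
  rw [Finset.mem_filter] at hv₀P
  obtain ⟨hv₀t, hv₀c⟩ := hv₀P
  set lam := f v₀ / c v₀ with hlam
  have hlam0 : 0 ≤ lam := div_nonneg (hf v₀) hv₀c.le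
  refine ⟨v₀, hv₀t, fun v => if v ∈ t then f v - lam * c v else 0, ?_, ?_⟩
  · intro v
    by_cases hv : v ∈ t
    · simp only [hv, if_true, sub_nonneg]
      rcases le_or_gt (c v) 0 with hcv | hcv
      · exact le_trans (mul_nonpos_of_nonneg_of_nonpos hlam0 hcv) (hf v)
      · have := hmin v (Finset.mem_filter.mpr ⟨hv, hcv⟩)
        calc lam * c v ≤ (f v / c v) * c v := by
              exact mul_le_mul_of_nonneg_right this hcv.le
          _ = f v := div_mul_cancel₀ _ (ne_of_gt hcv)
    · simp [hv]
  · have hz : (if v₀ ∈ t then f v₀ - lam * c v₀ else 0) • β v₀ = 0 := by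
      rw [if_pos hv₀t, hlam, div_mul_cancel₀ _ (ne_of_gt hv₀c), sub_self, zero_smul]
    show ∑ v ∈ t.erase v₀, (if v ∈ t then f v - lam * c v else 0) • β v = _
    rw [Finset.sum_erase (f := fun v => (if v ∈ t then f v - lam * c v else 0) • β v) t hz]
    have : ∀ v ∈ t, (if v ∈ t then f v - lam * c v else 0) • β v
        = f v • β v - lam • (c v • β v) := by
      intro v hv
      rw [if_pos hv, sub_smul, smul_smul]
    rw [Finset.sum_congr rfl this, Finset.sum_sub_distrib, ← Finset.smul_sum, hcs,
      smul_zero, sub_zero]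

/-- Conic Carathéodory: any element of a finitely generated cone lies in the cone generated
by a linearly independent subset. -/
lemma coneIm_cara (β : V →ₗ[ℝ] W) :
    ∀ t : Finset V, ∀ f : V → ℝ, (∀ v, 0 ≤ f v) →
      ∃ t' ⊆ t, LinearIndependent ℝ (fun v : t' => β v) ∧
        (∑ v ∈ t, f v • β v) ∈ coneIm β t' := by
  classical
  intro t
  induction t using Finset.strongInduction with
  | _ t ih =>
    intro f hf
    by_cases hli : LinearIndependent ℝ (fun v : t => β v)
    · exact ⟨t, subset_rfl, hli, f, hf, rfl⟩
    · rw [Fintype.not_linearIndependent_iff] at hli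
      obtain ⟨g, hg0, i₀, hi₀⟩ := hli
      have hsum : ∀ c : V → ℝ, (∀ i : t, c i = g i) → ∑ v ∈ t, c v • β v = 0 := by
        intro c hc
        rw [← Finset.sum_coe_sort t (fun v => c v • β v)]
        rw [← hg0]
        exact Finset.sum_congr rfl fun i _ => by rw [hc i]
      have hkey : ∃ c : V → ℝ, (∑ v ∈ t, c v • β v = 0) ∧ ∃ v ∈ t, 0 < c v := by
        rcases lt_or_gt_of_ne hi₀ with hneg | hpos
        · refine ⟨fun v => if h : v ∈ t then -g ⟨v, h⟩ else 0, ?_, ↑i₀, i₀.2, ?_⟩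
          · have : ∑ v ∈ t, (if h : v ∈ t then -g ⟨v, h⟩ else 0) • β v
                = - ∑ v ∈ t, (if h : v ∈ t then g ⟨v, h⟩ else 0) • β v := by
              rw [← Finset.sum_neg_distrib]
              refine Finset.sum_congr rfl fun v hv => ?_
              rw [dif_pos hv, dif_pos hv, neg_smul]
            rw [this, hsum _ (fun i => by rw [dif_pos i.2]), neg_zero]
          · show (0:ℝ) < dite ((i₀:V) ∈ t) (fun h => -g ⟨↑i₀, h⟩) (fun _ => 0)
            rw [dif_pos i₀.2]
            exact neg_pos.mpr hneg
        · refine ⟨fun v => if h : v ∈ t then g ⟨v, h⟩ else 0,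
            hsum _ (fun i => by rw [dif_pos i.2]), ↑i₀, i₀.2, ?_⟩
          show (0:ℝ) < dite ((i₀:V) ∈ t) (fun h => g ⟨↑i₀, h⟩) (fun _ => 0)
          rw [dif_pos i₀.2]
          exact hpos
      obtain ⟨c, hcs, hcpos⟩ := hkey
      obtain ⟨v₀, hv₀t, f', hf', hsum'⟩ := coneIm_step (β := β) t f hf c hcs hcpos
      obtain ⟨t', ht'sub, ht'li, hmem⟩ := ih (t.erase v₀) (Finset.erase_ssubset hv₀t) f' hf'
      rw [hsum'] at hmem
      exact ⟨t', ht'sub.trans (Finset.erase_subset _ _), ht'li, hmem⟩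

lemma isClosed_coneIm_of_li (β : V →ₗ[ℝ] W) (t : Finset V)
    (h : LinearIndependent ℝ (fun v : t => β v)) : IsClosed (coneIm β t) := by
  classical
  let L : (t → ℝ) →ₗ[ℝ] W :=
    { toFun := fun g => ∑ i : t, g i • β ↑i
      map_add' := fun g h => by simp [add_smul, Finset.sum_add_distrib]
      map_smul' := fun r g => by simp [smul_smul, Finset.smul_sum] }
  have hker : LinearMap.ker L = ⊥ := by
    rw [LinearMap.ker_eq_bot']
    intro g hg
    funext i
    exact Fintype.linearIndependent_iff.mp h g hg i
  have hemb := LinearMap.isClosedEmbedding_of_injective hker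
  have horth : IsClosed {g : t → ℝ | ∀ i, 0 ≤ g i} := by
    have : {g : t → ℝ | ∀ i, 0 ≤ g i} = ⋂ i, {g : t → ℝ | 0 ≤ g i} := by
      ext g; simp
    rw [this]
    exact isClosed_iInter fun i => isClosed_le continuous_const (continuous_apply i)
  have himg : coneIm β t = L '' {g : t → ℝ | ∀ i, 0 ≤ g i} := by
    ext x
    constructor
    · rintro ⟨f, hf, rfl⟩
      refine ⟨fun i => f ↑i, fun i => hf ↑i, ?_⟩
      show ∑ i : t, f ↑i • β ↑i = ∑ v ∈ t, f v • β v
      exact Finset.sum_coe_sort t (fun v => f v • β v)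
    · rintro ⟨g, hg, rfl⟩
      refine ⟨fun v => if h : v ∈ t then g ⟨v, h⟩ else 0, fun v => ?_, ?_⟩
      · dsimp only
        by_cases hv : v ∈ t
        · rw [dif_pos hv]; exact hg _
        · rw [dif_neg hv]
      · show ∑ i : t, g i • β ↑i = _
        rw [← Finset.sum_coe_sort t (fun v => (if h : v ∈ t then g ⟨v, h⟩ else 0) • β v)]
        exact Finset.sum_congr rfl fun i _ => by rw [dif_pos i.2]
  rw [himg]
  exact hemb.isClosedMap _ horth

lemma coneIm_mono (β : V →ₗ[ℝ] W) {t s : Finset V} (hts : t ⊆ s) :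
    coneIm β t ⊆ coneIm β s := by
  classical
  rintro x ⟨f, hf, rfl⟩
  refine ⟨fun v => if v ∈ t then f v else 0,
    fun v => by dsimp only; split <;> [exact hf v; rfl], ?_⟩
  rw [← Finset.sum_subset hts (fun v _ hvt => by dsimp only; rw [if_neg hvt, zero_smul])]
  exact Finset.sum_congr rfl fun v hv => by dsimp only; rw [if_pos hv]

lemma isClosed_coneIm (β : V →ₗ[ℝ] W) (s : Finset V) : IsClosed (coneIm β s) := by
  classical
  have hunion : coneIm β s =
      ⋃ t ∈ s.powerset, {x : W | LinearIndependent ℝ (fun v : t => β v)} ∩ coneIm β t := by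
    ext x
    constructor
    · rintro ⟨f, hf, rfl⟩
      obtain ⟨t', ht's, ht'li, hmem⟩ := coneIm_cara β s f hf
      exact Set.mem_biUnion (Finset.mem_powerset.mpr ht's) ⟨ht'li, hmem⟩
    · intro hx
      obtain ⟨t, ht, _, hmem⟩ := Set.mem_iUnion₂.mp hx
      exact coneIm_mono β (Finset.mem_powerset.mp ht) hmem
  rw [hunion]
  refine Set.Finite.isClosed_biUnion (s.powerset.finite_toSet) fun t _ => ?_
  by_cases hli : LinearIndependent ℝ (fun v : t => β v)
  · have : {x : W | LinearIndependent ℝ (fun v : t => β v)} = Set.univ := by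
      simp [Set.eq_univ_iff_forall, hli]
    rw [this, Set.univ_inter]
    exact isClosed_coneIm_of_li β t hli
  · have : {x : W | LinearIndependent ℝ (fun v : t => β v)} = ∅ := by
      simp [Set.eq_empty_iff_forall_notMem, hli]
    rw [this, Set.empty_inter]
    exact isClosed_empty

end Aux

/-- For a linear map `β : V → W` and a polyhedral convex cone `τ ⊆ V`,
the following are equivalent: (1) every functional `l` on `W` with `l ∘ β`
nonnegative on `τ` has `l ∘ β` vanishing on `τ`; (2) `0` is in the relative
interior of `β(τ)`. -/
theorem forall_pullback_nonneg_vanishes_iff_zero_mem_relint_image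
    (V W : Type*) [NormedAddCommGroup V] [NormedSpace ℝ V] [FiniteDimensional ℝ V]
    [NormedAddCommGroup W] [NormedSpace ℝ W] [FiniteDimensional ℝ W]
    (β : V →ₗ[ℝ] W) (s : Finset V) (τ : Set V) (hτ : τ = coneOf s) :
    (∀ l : W →ₗ[ℝ] ℝ, (∀ x ∈ τ, 0 ≤ l (β x)) → ∀ x ∈ τ, l (β x) = 0) ↔
      (0 : W) ∈ intrinsicInterior ℝ (β '' τ) := by
  classical
  subst hτ
  have himg : β '' coneOf s = coneIm β s := by
    ext x
    constructor
    · rintro ⟨y, ⟨f, hf, rfl⟩, rfl⟩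
      exact ⟨f, hf, by simp [map_sum, map_smul]⟩
    · rintro ⟨f, hf, rfl⟩
      exact ⟨∑ v ∈ s, f v • v, ⟨f, hf, rfl⟩, by simp [map_sum, map_smul]⟩
  constructor
  · -- (1) → (2)
    intro h1
    have hclosed := isClosed_coneIm β s
    have hconv := coneIm_convex β s
    -- Step 1: the negatives of the generators lie in the cone
    have hneg_gen : ∀ v ∈ s, -β v ∈ coneIm β s := by
      intro v hv
      by_contra hc
      obtain ⟨F, u, hFu, huF⟩ := geometric_hahn_banach_closed_point hconv hclosed hc
      have hu0 : 0 < u := by simpa using hFu 0 (coneIm_zero_mem β s)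
      have hFle : ∀ a ∈ coneIm β s, F a ≤ 0 := by
        intro a ha
        by_contra h'
        push_neg at h'
        have hmem := coneIm_smul_mem β s (le_of_lt (div_pos hu0 h')) ha
        have := hFu _ hmem
        rw [map_smul, smul_eq_mul, div_mul_cancel₀ _ (ne_of_gt h')] at this
        exact lt_irrefl u this
      have hvτ : v ∈ coneOf s := by
        refine ⟨fun u => if u = v then 1 else 0, fun u => by positivity, ?_⟩
        simp [ite_smul, Finset.sum_ite_eq' s v (fun u => u), hv]
      have hvanish := h1 (-(F : W →ₗ[ℝ] ℝ))
        (fun x hx => by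
          have hxm : β x ∈ coneIm β s := himg ▸ Set.mem_image_of_mem β hx
          simpa using neg_nonneg.mpr (hFle _ hxm)) v hvτ
      simp only [LinearMap.neg_apply, ContinuousLinearMap.coe_coe, neg_eq_zero] at hvanish
      rw [map_neg, hvanish] at huF
      simp at huF
      linarith
    -- Step 2: the cone is closed under negation, hence is a submodule
    have hneg : ∀ x ∈ coneIm β s, -x ∈ coneIm β s := by
      rintro x ⟨f, hf, rfl⟩
      have heq : -∑ v ∈ s, f v • β v = ∑ v ∈ s, f v • (-β v) := by
        rw [← Finset.sum_neg_distrib]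
        exact Finset.sum_congr rfl fun v _ => (smul_neg _ _).symm
      rw [heq]
      exact coneIm_sum_mem β s s f hf _ (fun v hv => hneg_gen v hv)
    let S : Submodule ℝ W :=
      { carrier := coneIm β s
        add_mem' := fun hx hy => coneIm_add_mem β s hx hy
        zero_mem' := coneIm_zero_mem β s
        smul_mem' := by
          intro r x hx
          rcases le_or_gt 0 r with hr | hr
          · exact coneIm_smul_mem β s hr hx
          · have := coneIm_smul_mem β s (neg_nonneg.mpr hr.le) (hneg x hx)
            rwa [neg_smul_neg] at this }
    -- Step 3: 0 is in the relative interior of a submodule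
    rw [himg, mem_intrinsicInterior]
    refine ⟨⟨0, subset_affineSpan ℝ _ (coneIm_zero_mem β s)⟩, ?_, rfl⟩
    have hpre : ((↑·) ⁻¹' coneIm β s : Set (affineSpan ℝ (coneIm β s))) = Set.univ := by
      ext p
      simp only [Set.mem_preimage, Set.mem_univ, iff_true]
      have hle : affineSpan ℝ (coneIm β s) ≤ S.toAffineSubspace :=
        affineSpan_le.mpr (fun x hx => Submodule.mem_toAffineSubspace.mpr hx)
      exact Submodule.mem_toAffineSubspace.mp (hle p.2)
    rw [hpre]
    simp
  · -- (2) → (1)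
    intro h l hl x hx
    have h1 : 0 ≤ l (β x) := hl x hx
    have h0τ : (0 : V) ∈ coneOf s := ⟨0, fun _ => le_rfl, by simp⟩
    have h0img : (0 : W) ∈ β '' coneOf s := ⟨0, h0τ, map_zero β⟩
    have hxA : β x ∈ affineSpan ℝ (β '' coneOf s) :=
      subset_affineSpan ℝ _ ⟨x, hx, rfl⟩
    have h0A : (0 : W) ∈ affineSpan ℝ (β '' coneOf s) := subset_affineSpan ℝ _ h0img
    have hdir : β x ∈ (affineSpan ℝ (β '' coneOf s)).direction := by
      have := AffineSubspace.vsub_mem_direction hxA h0A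
      simpa using this
    have hmem : ∀ t : ℝ, t • β x ∈ affineSpan ℝ (β '' coneOf s) := by
      intro t
      have := AffineSubspace.vadd_mem_of_mem_direction
        (Submodule.smul_mem _ t hdir) h0A
      simpa using this
    let m : ℝ → affineSpan ℝ (β '' coneOf s) := fun t => ⟨t • β x, hmem t⟩
    have hcont : Continuous m :=
      Continuous.subtype_mk (continuous_id.smul continuous_const) _
    rw [mem_intrinsicInterior] at h
    obtain ⟨y, hy, hy0⟩ := h
    have hm0 : m 0 = y := Subtype.ext (by simp [m, hy0])
    have hopen : IsOpen (m ⁻¹' interior ((↑·) ⁻¹' (β '' coneOf s))) :=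
      isOpen_interior.preimage hcont
    have h0mem : (0 : ℝ) ∈ m ⁻¹' interior ((↑·) ⁻¹' (β '' coneOf s)) := by
      rw [Set.mem_preimage, hm0]
      exact hy
    obtain ⟨ε, hε, hball⟩ := Metric.isOpen_iff.mp hopen 0 h0mem
    have htmem : (-(ε/2)) ∈ m ⁻¹' interior ((↑·) ⁻¹' (β '' coneOf s)) := by
      apply hball
      rw [Metric.mem_ball, Real.dist_eq, sub_zero, abs_neg, abs_of_pos (half_pos hε)]
      linarith
    have h3 := Set.mem_preimage.mp htmem
    have h4 := interior_subset h3
    have hin : (-(ε/2)) • β x ∈ β '' coneOf s := h4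
    obtain ⟨z, hz, hβz⟩ := hin
    have h2 : 0 ≤ l (β z) := hl z hz
    rw [hβz, map_smul, smul_eq_mul] at h2
    have hle : l (β x) ≤ 0 := by nlinarith
    linarith
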